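/- Let M, N : [0,T) → ℝ be C¹ with M(t) > 0 > N(t) on [0,T), satisfying M' ≥ −(1/2)MN − C₀² and N' ≤ (1/2)MN + C₀² for some C₀ ≥ 0, and suppose h(t) := √(−M(t)N(t)) satisfies h(0) > √2·C₀. Then h'(t) ≥ (1/2)(h(t) − √2·C₀)(h(t) + √2·C₀) ≥ (1/2)(h(t) − √2·C₀)² for all t where these quantities are defined, using the elementary inequality (M − N)/(2√(−MN)) ≥ 1. -/

import Mathlib

theorem stmt_15 (T C₀ : ℝ) (hT : 0 < T) (hC₀ : 0 ≤ C₀) (M N : ℝ → ℝ)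
    (hM : ContDiff ℝ 1 M) (hN : ContDiff ℝ 1 N)
    (hMN : ∀ t ∈ Set.Ico (0 : ℝ) T, M t > 0 ∧ N t < 0)
    (hM' : ∀ t ∈ Set.Ico (0 : ℝ) T, deriv M t ≥ -(1 / 2) * M t * N t - C₀ ^ 2)
    (hN' : ∀ t ∈ Set.Ico (0 : ℝ) T, deriv N t ≤ (1 / 2) * M t * N t + C₀ ^ 2)
    (h0 : Real.sqrt (-(M 0 * N 0)) > Real.sqrt 2 * C₀) :
    ∀ t ∈ Set.Ico (0 : ℝ) T,
      deriv (fun s => Real.sqrt (-(M s * N s))) t ≥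
        (1 / 2) * (Real.sqrt (-(M t * N t)) - Real.sqrt 2 * C₀) *
          (Real.sqrt (-(M t * N t)) + Real.sqrt 2 * C₀) ∧
      (1 / 2) * (Real.sqrt (-(M t * N t)) - Real.sqrt 2 * C₀) *
          (Real.sqrt (-(M t * N t)) + Real.sqrt 2 * C₀) ≥
        (1 / 2) * (Real.sqrt (-(M t * N t)) - Real.sqrt 2 * C₀) ^ 2 := by
  set a := Real.sqrt 2 * C₀ with ha
  have ha0 : 0 ≤ a := mul_nonneg (Real.sqrt_nonneg 2) hC₀
  have ha2 : a ^ 2 = 2 * C₀ ^ 2 := by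
    rw [ha, mul_pow, Real.sq_sqrt (by norm_num : (0:ℝ) ≤ 2)]
  set h := fun s => Real.sqrt (-(M s * N s)) with hh
  have hcont : Continuous h := Real.continuous_sqrt.comp
    ((hM.continuous.mul hN.continuous).neg)
  have hpos : ∀ t ∈ Set.Ico (0:ℝ) T, 0 < -(M t * N t) := by
    intro t ht
    obtain ⟨h1, h2⟩ := hMN t ht
    nlinarith
  have hderivAt : ∀ t ∈ Set.Ico (0:ℝ) T,
      HasDerivAt h ((-(deriv M t * N t + M t * deriv N t)) / (2 * h t)) t := by
    intro t ht
    have hMd := (hM.differentiable one_ne_zero t).hasDerivAt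
    have hNd := (hN.differentiable one_ne_zero t).hasDerivAt
    exact ((hMd.mul hNd).neg).sqrt (ne_of_gt (hpos t ht))
  have hsq : ∀ t ∈ Set.Ico (0:ℝ) T, h t ^ 2 = -(M t * N t) := fun t ht =>
    Real.sq_sqrt (le_of_lt (hpos t ht))
  have hspos : ∀ t ∈ Set.Ico (0:ℝ) T, 0 < h t := fun t ht => Real.sqrt_pos.2 (hpos t ht)
  have key : ∀ t ∈ Set.Ico (0:ℝ) T, a ≤ h t →
      deriv h t ≥ (1/2) * (h t - a) * (h t + a) := by
    intro t ht hha
    rw [(hderivAt t ht).deriv]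
    obtain ⟨hm, hn⟩ := hMN t ht
    have hs := hspos t ht
    have hs2 := hsq t ht
    have hMlow := hM' t ht
    have hNup := hN' t ht
    have hamgm : 2 * h t ≤ M t - N t := by
      nlinarith [sq_nonneg (M t + N t), hs.le, sq_nonneg (M t - N t - 2 * h t)]
    rw [ge_iff_le, le_div_iff₀ (by positivity)]
    have hnn : 0 ≤ (1/2) * h t ^ 2 - C₀ ^ 2 := by nlinarith
    nlinarith [mul_le_mul_of_nonneg_right hamgm hnn,
      mul_le_mul_of_nonneg_left hMlow (by linarith : (0:ℝ) ≤ -N t),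
      mul_le_mul_of_nonneg_left hNup hm.le]
  have hbig : ∀ t ∈ Set.Ico (0:ℝ) T, a < h t := by
    intro t₁ ht₁
    by_contra hcon
    push_neg at hcon
    set B := Set.Icc (0:ℝ) t₁ ∩ {t | h t ≤ a} with hB
    have hBne : B.Nonempty := ⟨t₁, ⟨ht₁.1, le_rfl⟩, hcon⟩
    have hBclosed : IsClosed B := isClosed_Icc.inter (isClosed_le hcont continuous_const)
    have hBbdd : BddBelow B := ⟨0, fun x hx => hx.1.1⟩
    set t₀ := sInf B with ht₀
    have ht₀B : t₀ ∈ B := hBclosed.csInf_mem hBne hBbdd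
    have ht₀Icc : t₀ ∈ Set.Icc (0:ℝ) t₁ := ht₀B.1
    have ht₀le : h t₀ ≤ a := ht₀B.2
    have h0gt : a < h 0 := h0
    have ht₀pos : 0 < t₀ := by
      rcases lt_or_eq_of_le ht₀Icc.1 with hlt | heq
      · exact hlt
      · exfalso; rw [heq] at h0gt; linarith
    have hlt : ∀ s ∈ Set.Ico (0:ℝ) t₀, a < h s := by
      intro s hs
      by_contra hcon2
      push_neg at hcon2
      have : s ∈ B := ⟨⟨hs.1, le_trans hs.2.le ht₀Icc.2⟩, hcon2⟩
      have := csInf_le hBbdd this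
      exact absurd hs.2 (not_lt.2 this)
    have hmono : MonotoneOn h (Set.Icc 0 t₀) := by
      apply monotoneOn_of_deriv_nonneg (convex_Icc _ _) hcont.continuousOn
      · intro s hs
        rw [interior_Icc] at hs
        have hsI : s ∈ Set.Ico 0 T :=
          ⟨hs.1.le, lt_of_lt_of_le hs.2 (le_trans ht₀Icc.2 (le_of_lt ht₁.2))⟩
        exact (hderivAt s hsI).differentiableAt.differentiableWithinAt
      · intro s hs
        rw [interior_Icc] at hs
        have hsI : s ∈ Set.Ico 0 T :=
          ⟨hs.1.le, lt_of_lt_of_le hs.2 (le_trans ht₀Icc.2 (le_of_lt ht₁.2))⟩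
        have hgt : a < h s := hlt s ⟨hs.1.le, hs.2⟩
        have hk := key s hsI hgt.le
        nlinarith [hspos s hsI]
    have : h 0 ≤ h t₀ := hmono ⟨le_rfl, ht₀pos.le⟩ ⟨ht₀pos.le, le_rfl⟩ ht₀pos.le
    linarith
  intro t ht
  have hgt := hbig t ht
  constructor
  · exact key t ht hgt.le
  · nlinarith
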